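/- (Flagged Jacobi–Trudi identity for factorial difference characters.) Let n ≥ 1, let R be a commutative ring, let x_1, …, x_n be invertible elements of R with x̄_i := x_i^{−1}, let a = (a_1, a_2, …) be a sequence in R, and let λ = (λ_1 ≥ … ≥ λ_n ≥ 0) be a partition with at most n parts. Then det_{1≤i,j≤n} ( (x_i|a)^{λ_j+n−j} − (x̄_i|a)^{λ_j+n−j} ) = ∏_{1≤i<j≤n}(x_i + x̄_i − x_j − x̄_j) · det_{1≤i,j≤n} ( h^{eod}_{λ_j−j+i}(x^{(i)}, x̄^{(i)}|a) ), where x^{(i)} := (x_i, …, x_n) and x̄^{(i)} := (x̄_i, …, x̄_n). -/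

import Mathlib

open Finset

noncomputable def geom {R : Type*} [CommRing R] (x : R) : PowerSeries R :=
  PowerSeries.mk fun k => x ^ k

noncomputable def lin {R : Type*} [CommRing R] (a : R) : PowerSeries R :=
  1 + PowerSeries.C a * PowerSeries.X

noncomputable def facpow {R : Type*} [CommRing R] (x : R) (a : ℕ → R) (m : ℕ) : R :=
  ∏ j ∈ Finset.range m, (x + a (j + 1))

noncomputable def hgl {R : Type*} [CommRing R] {n : ℕ} (x : Fin n → R) (a : ℕ → R) (m : ℤ) : R :=
  if 0 ≤ m then
    PowerSeries.coeff m.toNat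
      ((∏ i, geom (x i)) * ∏ j ∈ Finset.range (n + m.toNat - 1), lin (a (j + 1)))
  else 0

noncomputable def hsp {R : Type*} [CommRing R] {n : ℕ} (x : Fin n → Rˣ) (a : ℕ → R) (m : ℤ) : R :=
  if 0 ≤ m then
    PowerSeries.coeff m.toNat
      ((∏ i, geom ((x i : R)) * geom (((x i)⁻¹ : Rˣ) : R)) *
        ∏ j ∈ Finset.range (n + m.toNat - 1), lin (a (j + 1)))
  else 0

noncomputable def hoo {R : Type*} [CommRing R] {n : ℕ} (x : Fin n → Rˣ) (a : ℕ → R) (m : ℤ) : R :=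
  if 0 ≤ m then
    PowerSeries.coeff m.toNat
      ((1 + PowerSeries.X) * (∏ i, geom ((x i : R)) * geom (((x i)⁻¹ : Rˣ) : R)) *
        ∏ j ∈ Finset.range (n + m.toNat - 1), lin (a (j + 1)))
  else 0

noncomputable def heo {R : Type*} [CommRing R] {n : ℕ} (x : Fin n → Rˣ) (a : ℕ → R) (m : ℤ) : R :=
  if 0 ≤ m then
    if h : n = 1 then
      (PowerSeries.coeff m.toNat
        ((geom ((x ⟨0, by omega⟩ : Rˣ) : R) + geom (((x ⟨0, by omega⟩)⁻¹ : Rˣ) : R)) *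
          ∏ j ∈ Finset.range m.toNat, lin (a (j + 1))))
        - (if m = 0 then 1 else 0)
    else
      PowerSeries.coeff m.toNat
        ((1 - PowerSeries.X ^ 2) * (∏ i, geom ((x i : R)) * geom (((x i)⁻¹ : Rˣ) : R)) *
          ∏ j ∈ Finset.range (n + m.toNat - 1), lin (a (j + 1)))
  else 0

noncomputable def heod {R : Type*} [CommRing R] {n : ℕ} (x : Fin n → Rˣ) (a : ℕ → R) (m : ℤ) : R :=
  if 0 < m then
    if h : 0 < n then
      PowerSeries.coeff m.toNat
        ((geom ((x ⟨0, h⟩ : Rˣ) : R) - geom (((x ⟨0, h⟩)⁻¹ : Rˣ) : R)) *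
          (∏ i ∈ Finset.univ.filter (fun i : Fin n => i ≠ ⟨0, h⟩),
            geom ((x i : R)) * geom (((x i)⁻¹ : Rˣ) : R)) *
          ∏ j ∈ Finset.range (n + m.toNat - 1), lin (a (j + 1)))
    else 0
  else 0

section AuxFJT






variable {R : Type*} [CommRing R]

lemma geom_mul_one_sub (x : R) : geom x * (1 - PowerSeries.C x * PowerSeries.X) = 1 := by
  ext k
  rw [mul_sub, mul_one]
  cases k with
  | zero => simp [geom]
  | succ k =>
    simp [geom, mul_comm (PowerSeries.C x) PowerSeries.X, ← mul_assoc,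
      PowerSeries.coeff_succ_mul_X, pow_succ, mul_comm]

lemma geom_eq (x : R) : geom x = 1 + PowerSeries.C x * PowerSeries.X * geom x := by
  have h := geom_mul_one_sub x
  linear_combination h

lemma coeff_prod_lin {ι : Type*} (s : Finset ι) (b : ι → R) (k : ℕ) (hk : s.card < k) :
    PowerSeries.coeff k (∏ j ∈ s, lin (b j)) = 0 := by
  classical
  induction s using Finset.induction generalizing k with
  | empty =>
    have : k ≠ 0 := by simpa using hk.ne'
    simp [PowerSeries.coeff_one, this]
  | insert i s hx ih =>
    rw [Finset.prod_insert hx]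
    rw [show lin (b i) = 1 + PowerSeries.C (b i) * PowerSeries.X from rfl]
    rw [add_mul, one_mul, map_add]
    rw [Finset.card_insert_of_notMem hx] at hk
    obtain ⟨k, rfl⟩ : ∃ k', k = k' + 1 := ⟨k - 1, by omega⟩
    rw [mul_assoc, PowerSeries.coeff_C_mul, mul_comm PowerSeries.X,
      PowerSeries.coeff_succ_mul_X]
    rw [ih _ (by omega), ih _ (by omega), mul_zero, add_zero]

lemma facpow_eq_coeff (x : R) (a : ℕ → R) (m : ℕ) :
    facpow x a m = PowerSeries.coeff m (geom x * ∏ j ∈ Finset.range m, lin (a (j + 1))) := by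
  induction m with
  | zero => simp [facpow, geom]
  | succ m ih =>
    rw [Finset.prod_range_succ]
    rw [show lin (a (m+1)) = 1 + PowerSeries.C (a (m+1)) * PowerSeries.X from rfl]
    rw [show geom x * ((∏ j ∈ Finset.range m, lin (a (j+1))) * (1 + PowerSeries.C (a (m+1)) * PowerSeries.X))
        = geom x * (∏ j ∈ Finset.range m, lin (a (j+1)))
          + PowerSeries.C (a (m+1)) * ((geom x * ∏ j ∈ Finset.range m, lin (a (j+1))) * PowerSeries.X) from by ring,
      map_add, PowerSeries.coeff_C_mul, PowerSeries.coeff_succ_mul_X, ← ih]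
    have h1 : (PowerSeries.coeff (m+1)) (geom x * ∏ j ∈ Finset.range m, lin (a (j + 1)))
        = x * facpow x a m := by
      conv_lhs => rw [geom_eq x]
      rw [show (1 + PowerSeries.C x * PowerSeries.X * geom x) * ∏ j ∈ Finset.range m, lin (a (j+1))
          = (∏ j ∈ Finset.range m, lin (a (j+1)))
            + PowerSeries.C x * ((geom x * ∏ j ∈ Finset.range m, lin (a (j+1))) * PowerSeries.X) from by ring,
        map_add, coeff_prod_lin _ _ _ (by simp), zero_add,
        PowerSeries.coeff_C_mul, PowerSeries.coeff_succ_mul_X, ← ih]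
    rw [h1, facpow, Finset.prod_range_succ, ← facpow]
    ring


section FieldPart
open Polynomial
variable {K : Type*} [Field K] {n : ℕ}

noncomputable def xb (x : Fin n → Kˣ) (i : Fin n) : K := ((x i)⁻¹ : Kˣ)

noncomputable def zz (x : Fin n → Kˣ) (i : Fin n) : K := (x i : K) + xb x i

noncomputable def dp (x : Fin n → Kˣ) (i : Fin n) : Polynomial K :=
  (1 - Polynomial.C (x i : K) * Polynomial.X) * (1 - Polynomial.C (xb x i) * Polynomial.X)

noncomputable def cc (x : Fin n → Kˣ) (i : Fin n) : K := ∏ l ∈ Finset.Ioi i, (zz x i - zz x l)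

noncomputable def SS (x : Fin n → Kˣ) (i k : Fin n) : K :=
  cc x i * ((x i : K) - xb x i) /
    (((x k : K) - xb x k) * (zz x k - zz x i) * ∏ l ∈ (Finset.Ioi i).erase k, (zz x k - zz x l))

variable (x : Fin n → Kˣ)

lemma hu (i : Fin n) : (x i : K) * xb x i = 1 := by
  simp [xb]

lemma hsq_x (j : Fin n) : 1 + (x j : K) ^ 2 = (x j : K) * zz x j := by
  have := hu x j; unfold zz; linear_combination -this

lemma hsq_xb (j : Fin n) : 1 + (xb x j) ^ 2 = (xb x j) * zz x j := by
  have := hu x j; unfold zz; linear_combination -this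

lemma eval_dp (l j : Fin n) (s : K) (hs : 1 + s ^ 2 = s * zz x j) :
    (dp x l).eval s = s * (zz x j - zz x l) := by
  have hul := hu x l
  simp only [dp, eval_mul, eval_sub, eval_one, eval_mul, eval_C, eval_X]
  unfold zz at *
  linear_combination s ^ 2 * hul + hs

lemma natDegree_dp (l : Fin n) : (dp x l).natDegree ≤ 2 := by
  unfold dp
  apply (Polynomial.natDegree_mul_le).trans
  have h1 : (1 - Polynomial.C (x l : K) * Polynomial.X).natDegree ≤ 1 := by
    apply (Polynomial.natDegree_sub_le _ _).trans
    simp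
  have h2 : (1 - Polynomial.C (xb x l) * Polynomial.X).natDegree ≤ 1 := by
    apply (Polynomial.natDegree_sub_le _ _).trans
    simp
    exact (Polynomial.natDegree_C_mul_le _ _).trans (by simp)
  omega

lemma key_poly (hz : ∀ i j : Fin n, i ≠ j → zz x i ≠ zz x j)
    (hx : ∀ i, (x i : K) ≠ xb x i) (i : Fin n) :
    (Polynomial.C (cc x i * ((x i : K) - xb x i)) *
        Polynomial.X ^ ((Finset.Ioi i).card + 1) : Polynomial K) =
      Polynomial.C ((x i : K) - xb x i) * Polynomial.X * ∏ l ∈ Finset.Ioi i, dp x l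
        + ∑ k ∈ Finset.Ioi i, Polynomial.C (SS x i k * ((x k : K) - xb x k)) * Polynomial.X *
            (dp x i * ∏ l ∈ (Finset.Ioi i).erase k, dp x l) := by
  classical
  set r := (Finset.Ioi i).card with hr
  rw [← sub_eq_zero]
  set p : Polynomial K := _ - _ with hp
  have heval : ∀ (j : Fin n), j ∈ insert i (Finset.Ioi i) → ∀ s : K,
      1 + s ^ 2 = s * zz x j → p.eval s = 0 := by
    intro j hj s hs
    have hdp : ∀ l, (dp x l).eval s = s * (zz x j - zz x l) := fun l => eval_dp x l j s hs
    rw [hp, eval_sub, sub_eq_zero]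
    simp only [eval_mul, eval_add, eval_pow, eval_C, eval_X, Polynomial.eval_finset_sum,
      Polynomial.eval_prod, hdp]
    rcases Finset.mem_insert.mp hj with rfl | hj
    · -- j = i case
      have hsum : ∀ k ∈ Finset.Ioi j, (SS x j k * ((x k : K) - xb x k)) * s *
          ((s * (zz x j - zz x j)) * ∏ l ∈ (Finset.Ioi j).erase k, (s * (zz x j - zz x l))) = 0 := by
        intro k _; simp
      rw [Finset.sum_congr rfl hsum, Finset.sum_const, smul_zero, add_zero,
        Finset.prod_mul_distrib, Finset.prod_const]
      rw [show (∏ l ∈ Finset.Ioi j, (zz x j - zz x l)) = cc x j from rfl, ← hr]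
      ring
    · -- j ∈ Ioi i case
      have hjne : j ≠ i := by
        intro h; subst h; exact absurd hj (by simp)
      have hprod0 : (∏ l ∈ Finset.Ioi i, (s * (zz x j - zz x l))) = 0 :=
        Finset.prod_eq_zero hj (by simp)
      rw [hprod0, mul_zero, zero_add]
      rw [Finset.sum_eq_single_of_mem j hj (by
        intro k hk hkj
        have hjk : j ∈ (Finset.Ioi i).erase k := Finset.mem_erase.mpr ⟨fun h => hkj h.symm, hj⟩
        rw [Finset.prod_eq_zero hjk (by simp)]
        ring)]
      rw [Finset.prod_mul_distrib, Finset.prod_const, Finset.card_erase_of_mem hj, ← hr]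
      obtain ⟨r', hr'⟩ : ∃ r', r = r' + 1 :=
        ⟨r - 1, by have : 0 < r := Finset.card_pos.mpr ⟨j, hj⟩; omega⟩
      have hD : ((x j : K) - xb x j) * (zz x j - zz x i) *
          ∏ l ∈ (Finset.Ioi i).erase j, (zz x j - zz x l) ≠ 0 := by
        apply mul_ne_zero (mul_ne_zero (sub_ne_zero.mpr (hx j)) (sub_ne_zero.mpr (hz j i hjne)))
        rw [Finset.prod_ne_zero_iff]
        exact fun l hl => sub_ne_zero.mpr (hz j l (Finset.mem_erase.mp hl).1.symm)
      have hSS : SS x i j * (((x j : K) - xb x j) * (zz x j - zz x i) *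
          ∏ l ∈ (Finset.Ioi i).erase j, (zz x j - zz x l)) = cc x i * ((x i : K) - xb x i) :=
        div_mul_cancel₀ _ hD
      rw [hr', Nat.add_sub_cancel]
      linear_combination (-(s ^ (r' + 2))) * hSS
  -- now kill p by root counting
  have xb_eq : ∀ j, xb x j = ((x j : K))⁻¹ := by intro j; simp [xb]
  have hzinj : ∀ j l : Fin n, zz x j = zz x l → j = l := by
    intro j l h; by_contra hne; exact hz j l hne h
  have hA : ∀ j l : Fin n, (x j : K) = (x l : K) → j = l := by
    intro j l h; exact hzinj j l (by rw [zz, zz, xb_eq, xb_eq, h])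
  have hB : ∀ j l : Fin n, (x j : K) = xb x l → j = l := by
    intro j l h
    refine hzinj j l ?_
    rw [zz, zz, xb_eq, xb_eq, h, xb_eq, inv_inv]
    ring
  have hdprod : ∀ (u : Finset (Fin n)), (∏ l ∈ u, dp x l).natDegree ≤ 2 * u.card := by
    intro u
    refine (Polynomial.natDegree_prod_le _ _).trans ?_
    calc ∑ l ∈ u, (dp x l).natDegree ≤ ∑ _l ∈ u, 2 :=
          Finset.sum_le_sum fun l _ => natDegree_dp x l
      _ = 2 * u.card := by rw [Finset.sum_const]; ring
  have hCX : ∀ (a : K), (Polynomial.C a * Polynomial.X : Polynomial K).natDegree ≤ 1 :=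
    fun a => (Polynomial.natDegree_C_mul_le _ _).trans (by simp)
  set t : Finset (Fin n) := insert i (Finset.Ioi i) with ht
  have hit : i ∉ Finset.Ioi i := by simp
  have hcardt : t.card = r + 1 := by rw [ht, Finset.card_insert_of_notMem hit]
  refine Polynomial.eq_zero_of_natDegree_lt_card_of_eval_eq_zero p
    (f := fun q : ↥t × Bool => if q.2 then (x q.1.1 : K) else xb x q.1.1) ?_ ?_ ?_
  · rintro ⟨⟨j, hj⟩, b⟩ ⟨⟨l, hl⟩, b'⟩ h
    cases b <;> cases b' <;> simp only [if_true, if_false, Bool.false_eq_true] at h ⊢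
    · rw [xb_eq, xb_eq] at h
      obtain rfl : j = l := hA j l (inv_injective h)
      rfl
    · have e : l = j := hB l j h.symm
      rw [e] at h
      exact absurd h.symm (hx j)
    · have e : j = l := hB j l h
      rw [← e] at h
      exact absurd h (hx j)
    · obtain rfl : j = l := hA j l h
      rfl
  · rintro ⟨⟨j, hj⟩, b⟩
    cases b
    · exact heval j hj _ (hsq_xb x j)
    · exact heval j hj _ (hsq_x x j)
  · rw [Fintype.card_prod, Fintype.card_coe, hcardt, Fintype.card_bool]
    have h1 : (Polynomial.C (cc x i * ((x i : K) - xb x i)) *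
        Polynomial.X ^ (r + 1)).natDegree ≤ r + 1 :=
      (Polynomial.natDegree_C_mul_le _ _).trans (by simp)
    have h2 : (Polynomial.C ((x i : K) - xb x i) * Polynomial.X *
        ∏ l ∈ Finset.Ioi i, dp x l).natDegree ≤ 1 + 2 * r := by
      refine (Polynomial.natDegree_mul_le).trans ?_
      have := hdprod (Finset.Ioi i)
      have := hCX ((x i : K) - xb x i)
      omega
    have h3 : (∑ k ∈ Finset.Ioi i, Polynomial.C (SS x i k * ((x k : K) - xb x k)) *
        Polynomial.X * (dp x i * ∏ l ∈ (Finset.Ioi i).erase k, dp x l)).natDegree ≤ 2 * r + 1 := by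
      refine Polynomial.natDegree_sum_le_of_forall_le _ _ ?_
      intro k hk
      refine (Polynomial.natDegree_mul_le).trans ?_
      have e1 := hCX (SS x i k * ((x k : K) - xb x k))
      have e2 : (dp x i * ∏ l ∈ (Finset.Ioi i).erase k, dp x l).natDegree ≤ 2 * r := by
        refine (Polynomial.natDegree_mul_le).trans ?_
        have := hdprod ((Finset.Ioi i).erase k)
        have := natDegree_dp x i
        have : ((Finset.Ioi i).erase k).card = r - 1 := by rw [Finset.card_erase_of_mem hk, hr]
        have hrpos : 0 < r := Finset.card_pos.mpr ⟨k, hk⟩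
        omega
      omega
    have hsub := Polynomial.natDegree_sub_le
      (Polynomial.C (cc x i * ((x i : K) - xb x i)) * Polynomial.X ^ (r + 1))
      ((Polynomial.C ((x i : K) - xb x i) * Polynomial.X * ∏ l ∈ Finset.Ioi i, dp x l) +
        ∑ k ∈ Finset.Ioi i, Polynomial.C (SS x i k * ((x k : K) - xb x k)) * Polynomial.X *
          (dp x i * ∏ l ∈ (Finset.Ioi i).erase k, dp x l))
    have hadd := Polynomial.natDegree_add_le
      (Polynomial.C ((x i : K) - xb x i) * Polynomial.X * ∏ l ∈ Finset.Ioi i, dp x l)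
      (∑ k ∈ Finset.Ioi i, Polynomial.C (SS x i k * ((x k : K) - xb x k)) * Polynomial.X *
        (dp x i * ∏ l ∈ (Finset.Ioi i).erase k, dp x l))
    rw [hp]
    omega

end FieldPart

section SeriesPart
open Polynomial
variable {K : Type*} [Field K] {n : ℕ} (x : Fin n → Kˣ)

noncomputable def fser (i : Fin n) : PowerSeries K := geom (x i : K) - geom (xb x i)

noncomputable def Eser (i : Fin n) : PowerSeries K := geom (x i : K) * geom (xb x i)

lemma fser_mul_dp (i : Fin n) :
    fser x i * (dp x i : PowerSeries K) =
      PowerSeries.C ((x i : K) - xb x i) * PowerSeries.X := by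
  have h1 := geom_mul_one_sub (x i : K)
  have h2 := geom_mul_one_sub (xb x i)
  rw [dp, Polynomial.coe_mul, Polynomial.coe_sub, Polynomial.coe_sub, Polynomial.coe_one,
    Polynomial.coe_mul, Polynomial.coe_mul, Polynomial.coe_C, Polynomial.coe_C, Polynomial.coe_X]
  rw [show fser x i * ((1 - PowerSeries.C (x i : K) * PowerSeries.X) *
      (1 - PowerSeries.C (xb x i) * PowerSeries.X)) =
      (geom (x i : K) * (1 - PowerSeries.C (x i : K) * PowerSeries.X)) *
        (1 - PowerSeries.C (xb x i) * PowerSeries.X)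
      - (geom (xb x i) * (1 - PowerSeries.C (xb x i) * PowerSeries.X)) *
        (1 - PowerSeries.C (x i : K) * PowerSeries.X) from by rw [fser]; ring,
    h1, h2]
  simp only [map_sub]
  ring

lemma Eser_mul_dp (i : Fin n) : Eser x i * (dp x i : PowerSeries K) = 1 := by
  have h1 := geom_mul_one_sub (x i : K)
  have h2 := geom_mul_one_sub (xb x i)
  rw [dp, Polynomial.coe_mul, Polynomial.coe_sub, Polynomial.coe_sub, Polynomial.coe_one,
    Polynomial.coe_mul, Polynomial.coe_mul, Polynomial.coe_C, Polynomial.coe_C, Polynomial.coe_X]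
  rw [show Eser x i * ((1 - PowerSeries.C (x i : K) * PowerSeries.X) *
      (1 - PowerSeries.C (xb x i) * PowerSeries.X)) =
      (geom (x i : K) * (1 - PowerSeries.C (x i : K) * PowerSeries.X)) *
        (geom (xb x i) * (1 - PowerSeries.C (xb x i) * PowerSeries.X)) from by rw [Eser]; ring,
    h1, h2, one_mul]

lemma key_series (hz : ∀ i j : Fin n, i ≠ j → zz x i ≠ zz x j)
    (hx : ∀ i, (x i : K) ≠ xb x i) (i : Fin n) :
    PowerSeries.C (cc x i) * PowerSeries.X ^ (Finset.Ioi i).card * fser x i *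
        ∏ l ∈ Finset.Ioi i, Eser x l =
      fser x i + ∑ k ∈ Finset.Ioi i, PowerSeries.C (SS x i k) * fser x k := by
  classical
  have hit : i ∉ Finset.Ioi i := by simp
  have hne : (∏ l ∈ insert i (Finset.Ioi i), (dp x l : PowerSeries K)) ≠ 0 := by
    intro h0
    have h1 : PowerSeries.constantCoeff
        (∏ l ∈ insert i (Finset.Ioi i), (dp x l : PowerSeries K)) = 1 := by
      rw [map_prod]
      refine Finset.prod_eq_one fun l _ => ?_
      have : PowerSeries.constantCoeff (dp x l : PowerSeries K) = (dp x l).coeff 0 := by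
        rw [← Polynomial.coeff_coe, PowerSeries.coeff_zero_eq_constantCoeff]
      rw [this, dp, Polynomial.mul_coeff_zero]
      simp
    rw [h0, map_zero] at h1
    exact zero_ne_one h1
  apply mul_right_cancel₀ hne
  rw [Finset.prod_insert hit]
  have hkp := congrArg (Polynomial.coeToPowerSeries.ringHom (R := K)) (key_poly x hz hx i)
  simp only [map_mul, map_add, map_pow, map_sum, map_prod,
    Polynomial.coeToPowerSeries.ringHom_apply, Polynomial.coe_C, Polynomial.coe_X] at hkp
  calc PowerSeries.C (cc x i) * PowerSeries.X ^ (Finset.Ioi i).card * fser x i *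
        (∏ l ∈ Finset.Ioi i, Eser x l) * ((dp x i : PowerSeries K) *
          ∏ l ∈ Finset.Ioi i, (dp x l : PowerSeries K))
      = PowerSeries.C (cc x i) * PowerSeries.X ^ (Finset.Ioi i).card *
          (fser x i * (dp x i : PowerSeries K)) *
          ∏ l ∈ Finset.Ioi i, (Eser x l * (dp x l : PowerSeries K)) := by
        rw [Finset.prod_mul_distrib]; ring
    _ = PowerSeries.C (cc x i) * PowerSeries.X ^ (Finset.Ioi i).card *
          (PowerSeries.C ((x i : K) - xb x i) * PowerSeries.X) * 1 := by
        rw [fser_mul_dp, Finset.prod_congr rfl fun l _ => Eser_mul_dp x l,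
          Finset.prod_const_one]
    _ = PowerSeries.C (cc x i) * PowerSeries.C ((x i : K) - xb x i) *
          PowerSeries.X ^ ((Finset.Ioi i).card + 1) := by
        rw [pow_succ]; ring
    _ = PowerSeries.C ((x i : K) - xb x i) * PowerSeries.X *
          ∏ l ∈ Finset.Ioi i, (dp x l : PowerSeries K)
        + ∑ k ∈ Finset.Ioi i, PowerSeries.C (SS x i k) *
            PowerSeries.C ((x k : K) - xb x k) * PowerSeries.X *
            ((dp x i : PowerSeries K) *
              ∏ l ∈ (Finset.Ioi i).erase k, (dp x l : PowerSeries K)) := hkp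
    _ = (fser x i + ∑ k ∈ Finset.Ioi i, PowerSeries.C (SS x i k) * fser x k) *
          ((dp x i : PowerSeries K) * ∏ l ∈ Finset.Ioi i, (dp x l : PowerSeries K)) := by
        rw [add_mul, Finset.sum_mul]
        refine congrArg₂ (· + ·) ?_ (Finset.sum_congr rfl fun k hk => ?_)
        · rw [show fser x i * ((dp x i : PowerSeries K) *
              ∏ l ∈ Finset.Ioi i, (dp x l : PowerSeries K)) =
              (fser x i * (dp x i : PowerSeries K)) *
                ∏ l ∈ Finset.Ioi i, (dp x l : PowerSeries K) from by ring, fser_mul_dp]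
        · rw [← Finset.mul_prod_erase _ _ hk]
          rw [show PowerSeries.C (SS x i k) * fser x k * ((dp x i : PowerSeries K) *
              ((dp x k : PowerSeries K) * ∏ l ∈ (Finset.Ioi i).erase k, (dp x l : PowerSeries K))) =
              PowerSeries.C (SS x i k) * (fser x k * (dp x k : PowerSeries K)) *
                ((dp x i : PowerSeries K) *
                  ∏ l ∈ (Finset.Ioi i).erase k, (dp x l : PowerSeries K)) from by ring, fser_mul_dp]
          ring


lemma A_entry (a : ℕ → K) (i : Fin n) (m : ℕ) :
    facpow ((x i : K)) a m - facpow (xb x i) a m =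
      PowerSeries.coeff m (fser x i * ∏ t ∈ Finset.range m, lin (a (t + 1))) := by
  rw [facpow_eq_coeff, facpow_eq_coeff, fser, sub_mul, map_sub]

lemma constantCoeff_fser (i : Fin n) : PowerSeries.constantCoeff (fser x i) = 0 := by
  simp [fser, geom, PowerSeries.constantCoeff_mk]

lemma heod_eq (a : ℕ → K) (i : Fin n) (ν μ : ℕ) (hμ : μ < n) :
    heod (fun k : Fin (n - (i : ℕ)) =>
        x ⟨(i : ℕ) + (k : ℕ), by have := k.isLt; have := i.isLt; omega⟩) a
      ((ν : ℤ) - μ + (i : ℕ)) =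
    PowerSeries.coeff (ν + (n - 1 - μ))
      (PowerSeries.X ^ (n - 1 - (i : ℕ)) * fser x i * (∏ l ∈ Finset.Ioi i, Eser x l) *
        ∏ t ∈ Finset.range (ν + (n - 1 - μ)), lin (a (t + 1))) := by
  classical
  have hin : (i : ℕ) < n := i.isLt
  have hass : PowerSeries.X ^ (n - 1 - (i : ℕ)) * fser x i *
      (∏ l ∈ Finset.Ioi i, Eser x l) * ∏ t ∈ Finset.range (ν + (n - 1 - μ)), lin (a (t + 1)) =
      PowerSeries.X ^ (n - 1 - (i : ℕ)) * (fser x i * (∏ l ∈ Finset.Ioi i, Eser x l) *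
        ∏ t ∈ Finset.range (ν + (n - 1 - μ)), lin (a (t + 1))) := by ring
  by_cases hm : 0 < (ν : ℤ) - μ + (i : ℕ)
  · have hpos : 0 < n - (i : ℕ) := by omega
    rw [heod, if_pos hm, dif_pos hpos]
    have hx0 : (⟨(i : ℕ) + (((⟨0, hpos⟩ : Fin (n - (i : ℕ)))) : ℕ), by omega⟩ : Fin n) = i := by
      ext; simp
    have hprod : (∏ k ∈ Finset.univ.filter
          (fun k : Fin (n - (i : ℕ)) => k ≠ ⟨0, hpos⟩),
          geom ((x ⟨(i : ℕ) + (k : ℕ), by have := k.isLt; omega⟩ : Kˣ) : K) *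
            geom (((x ⟨(i : ℕ) + (k : ℕ), by have := k.isLt; omega⟩)⁻¹ : Kˣ) : K)) =
        ∏ l ∈ Finset.Ioi i, Eser x l := by
      refine Finset.prod_nbij' (fun k => (⟨(i : ℕ) + (k : ℕ), by have := k.isLt; omega⟩ : Fin n))
        (fun l => (⟨(l : ℕ) - (i : ℕ), by have := l.isLt; omega⟩ : Fin (n - (i : ℕ)))) ?_ ?_ ?_ ?_ ?_
      · intro k hk
        simp only [Finset.mem_filter, Finset.mem_univ, true_and] at hk
        have hk0 : 0 < (k : ℕ) := by
          rcases Nat.eq_zero_or_pos (k : ℕ) with h | h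
          · exact absurd (by ext; simp [h]) hk
          · exact h
        simp only [Finset.mem_Ioi]
        exact Fin.lt_def.mpr (by simp; omega)
      · intro l hl
        simp only [Finset.mem_Ioi, Fin.lt_def] at hl
        simp only [Finset.mem_filter, Finset.mem_univ, true_and]
        intro h
        have := congrArg Fin.val h
        simp at this
        omega
      · intro k hk
        simp only [Finset.mem_filter, Finset.mem_univ, true_and] at hk
        ext; simp
      · intro l hl
        simp only [Finset.mem_Ioi, Fin.lt_def] at hl
        ext; simp; omega
      · intro k hk
        rfl
    rw [hprod, hx0]
    have hcnt : n - (i : ℕ) + ((ν : ℤ) - μ + (i : ℕ)).toNat - 1 = ν + (n - 1 - μ) := by omega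
    rw [hcnt]
    have hd : ν + (n - 1 - μ) = ((ν : ℤ) - μ + (i : ℕ)).toNat + (n - 1 - (i : ℕ)) := by omega
    conv_rhs => rw [hass]
    rw [show (PowerSeries.coeff (ν + (n - 1 - μ))) =
      (PowerSeries.coeff (((ν : ℤ) - μ + (i : ℕ)).toNat + (n - 1 - (i : ℕ)))) from by rw [← hd]]
    rw [PowerSeries.coeff_X_pow_mul]
    simp only [fser, xb]
  · rw [heod, if_neg hm, hass, PowerSeries.coeff_X_pow_mul']
    split_ifs with h
    · have : ν + (n - 1 - μ) - (n - 1 - (i : ℕ)) = 0 := by omega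
      rw [this, PowerSeries.coeff_zero_eq_constantCoeff, map_mul, map_mul, constantCoeff_fser]
      ring
    · rfl

lemma row_lemma (hz : ∀ i j : Fin n, i ≠ j → zz x i ≠ zz x j)
    (hx : ∀ i, (x i : K) ≠ xb x i) (a : ℕ → K) (lam : Fin n → ℕ) (i j : Fin n) :
    cc x i * heod (fun k : Fin (n - (i : ℕ)) =>
        x ⟨(i : ℕ) + (k : ℕ), by have := k.isLt; have := i.isLt; omega⟩) a
      ((lam j : ℤ) - (j : ℕ) + (i : ℕ)) =
    (facpow ((x i : K)) a (lam j + (n - 1 - (j : ℕ)))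
        - facpow (xb x i) a (lam j + (n - 1 - (j : ℕ))))
      + ∑ k ∈ Finset.Ioi i, SS x i k *
          (facpow ((x k : K)) a (lam j + (n - 1 - (j : ℕ)))
            - facpow (xb x k) a (lam j + (n - 1 - (j : ℕ)))) := by
  classical
  rw [heod_eq x a i (lam j) (j : ℕ) j.isLt]
  set mj := lam j + (n - 1 - (j : ℕ)) with hmj
  set P : PowerSeries K := ∏ t ∈ Finset.range mj, lin (a (t + 1)) with hP
  rw [← PowerSeries.coeff_C_mul]
  rw [show PowerSeries.C (cc x i) * (PowerSeries.X ^ (n - 1 - (i : ℕ)) * fser x i *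
      (∏ l ∈ Finset.Ioi i, Eser x l) * P) =
      (PowerSeries.C (cc x i) * PowerSeries.X ^ (Finset.Ioi i).card * fser x i *
        ∏ l ∈ Finset.Ioi i, Eser x l) * P from by rw [Fin.card_Ioi]; ring]
  rw [key_series x hz hx i, add_mul, Finset.sum_mul, map_add, map_sum]
  rw [A_entry]
  congr 1
  refine Finset.sum_congr rfl fun k hk => ?_
  rw [mul_assoc, PowerSeries.coeff_C_mul, A_entry]

theorem main_field (hn : 1 ≤ n) (x : Fin n → Kˣ) (a : ℕ → K) (lam : Fin n → ℕ)
    (hz : ∀ i j : Fin n, i ≠ j → zz x i ≠ zz x j) (hx : ∀ i, (x i : K) ≠ xb x i) :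
    Matrix.det (Matrix.of fun i j : Fin n =>
        facpow ((x i : K)) a (lam j + (n - 1 - (j : ℕ)))
          - facpow ((((x i)⁻¹ : Kˣ) : K)) a (lam j + (n - 1 - (j : ℕ)))) =
      (∏ i : Fin n, ∏ j ∈ Finset.Ioi i,
          ((x i : K) + (((x i)⁻¹ : Kˣ) : K) - (x j : K) - (((x j)⁻¹ : Kˣ) : K))) *
        Matrix.det (Matrix.of fun i j : Fin n =>
          heod (fun k : Fin (n - (i : ℕ)) =>
              x ⟨(i : ℕ) + (k : ℕ), by have := k.isLt; have := i.isLt; omega⟩) a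
            ((lam j : ℤ) - (j : ℕ) + (i : ℕ))) := by
  classical
  set Amat : Matrix (Fin n) (Fin n) K := Matrix.of fun i j : Fin n =>
    facpow ((x i : K)) a (lam j + (n - 1 - (j : ℕ)))
      - facpow ((((x i)⁻¹ : Kˣ) : K)) a (lam j + (n - 1 - (j : ℕ))) with hAmat
  set Bmat : Matrix (Fin n) (Fin n) K := Matrix.of fun i j : Fin n =>
    heod (fun k : Fin (n - (i : ℕ)) =>
        x ⟨(i : ℕ) + (k : ℕ), by have := k.isLt; have := i.isLt; omega⟩) a
      ((lam j : ℤ) - (j : ℕ) + (i : ℕ)) with hBmat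
  set Smat : Matrix (Fin n) (Fin n) K := Matrix.of fun i k : Fin n =>
    if i = k then 1 else if i < k then SS x i k else 0 with hSmat
  have hSA : Matrix.diagonal (fun i => cc x i) * Bmat = Smat * Amat := by
    ext i j
    rw [Matrix.diagonal_mul, Matrix.mul_apply]
    have hsub : ∀ k ∈ Finset.univ, k ∉ insert i (Finset.Ioi i) → Smat i k * Amat k j = 0 := by
      intro k _ hk
      simp only [Finset.mem_insert, Finset.mem_Ioi, not_or, not_lt] at hk
      have h1 : i ≠ k := fun e => hk.1 e.symm
      have h2 : ¬ i < k := not_lt.mpr hk.2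
      rw [hSmat]
      simp only [Matrix.of_apply, if_neg h1, if_neg h2, zero_mul]
    rw [← Finset.sum_subset (Finset.subset_univ (insert i (Finset.Ioi i))) hsub]
    rw [Finset.sum_insert (by simp)]
    have hSii : Smat i i = 1 := by simp [hSmat]
    have hSik : ∀ k ∈ Finset.Ioi i, Smat i k * Amat k j = SS x i k * Amat k j := by
      intro k hk
      simp only [Finset.mem_Ioi] at hk
      rw [hSmat]
      simp only [Matrix.of_apply, if_neg hk.ne, if_pos hk]
    rw [hSii, one_mul, Finset.sum_congr rfl hSik]
    exact row_lemma x hz hx a lam i j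
  have hdet := congrArg Matrix.det hSA
  rw [Matrix.det_mul, Matrix.det_mul, Matrix.det_diagonal] at hdet
  have hdetS : Smat.det = 1 := by
    have htri : Smat.BlockTriangular id := by
      intro i j hij
      simp only [id] at hij
      rw [hSmat]
      simp only [Matrix.of_apply, if_neg (ne_of_gt hij), if_neg (not_lt_of_gt hij)]
    rw [Matrix.det_of_upperTriangular htri]
    refine Finset.prod_eq_one fun i _ => by simp [hSmat]
  rw [hdetS, one_mul] at hdet
  have hcc : (∏ i : Fin n, cc x i) = ∏ i : Fin n, ∏ j ∈ Finset.Ioi i,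
      ((x i : K) + (((x i)⁻¹ : Kˣ) : K) - (x j : K) - (((x j)⁻¹ : Kˣ) : K)) := by
    refine Finset.prod_congr rfl fun i _ => Finset.prod_congr rfl fun j _ => ?_
    rw [zz, zz, xb, xb]
    ring
  rw [← hcc]
  exact hdet.symm

end SeriesPart

section MapPart

variable {R₁ R₂ : Type*} [CommRing R₁] [CommRing R₂] (ψ : R₁ →+* R₂)

lemma map_geom (y : R₁) : PowerSeries.map ψ (geom y) = geom (ψ y) := by
  ext k; simp [geom, PowerSeries.coeff_map]

lemma map_lin (b : R₁) : PowerSeries.map ψ (lin b) = lin (ψ b) := by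
  simp [lin]

lemma map_facpow (y : R₁) (b : ℕ → R₁) (m : ℕ) :
    ψ (facpow y b m) = facpow (ψ y) (fun t => ψ (b t)) m := by
  simp [facpow]

lemma map_heod {n : ℕ} (u : Fin n → R₁ˣ) (b : ℕ → R₁) (m : ℤ) :
    ψ (heod u b m) = heod (fun i => Units.map (ψ : R₁ →* R₂) (u i)) (fun t => ψ (b t)) m := by
  rw [heod, heod]
  split_ifs with h1 h2
  · rw [← PowerSeries.coeff_map]
    congr 1
    simp only [map_mul, map_sub, map_prod, map_geom, map_lin, Units.coe_map,
      Units.coe_map_inv, MonoidHom.coe_coe]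
  · exact map_zero ψ
  · exact map_zero ψ

end MapPart

section DefsEOD

noncomputable def lhsEOD {R : Type*} [CommRing R] {n : ℕ} (u : Fin n → Rˣ) (b : ℕ → R)
    (lam : Fin n → ℕ) : R :=
  Matrix.det (Matrix.of fun i j : Fin n =>
    facpow ((u i : R)) b (lam j + (n - 1 - (j : ℕ)))
      - facpow ((((u i)⁻¹ : Rˣ) : R)) b (lam j + (n - 1 - (j : ℕ))))

noncomputable def rhsEOD {R : Type*} [CommRing R] {n : ℕ} (u : Fin n → Rˣ) (b : ℕ → R)
    (lam : Fin n → ℕ) : R :=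
  (∏ i : Fin n, ∏ j ∈ Finset.Ioi i,
      ((u i : R) + (((u i)⁻¹ : Rˣ) : R) - (u j : R) - (((u j)⁻¹ : Rˣ) : R))) *
    Matrix.det (Matrix.of fun i j : Fin n =>
      heod (fun k : Fin (n - (i : ℕ)) =>
          u ⟨(i : ℕ) + (k : ℕ), by have := k.isLt; have := i.isLt; omega⟩) b
        ((lam j : ℤ) - (j : ℕ) + (i : ℕ)))

variable {R₁ R₂ : Type*} [CommRing R₁] [CommRing R₂] (ψ : R₁ →+* R₂)

lemma map_lhsEOD {n : ℕ} (u : Fin n → R₁ˣ) (b : ℕ → R₁) (lam : Fin n → ℕ) :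
    ψ (lhsEOD u b lam) =
      lhsEOD (fun i => Units.map (ψ : R₁ →* R₂) (u i)) (fun t => ψ (b t)) lam := by
  rw [lhsEOD, lhsEOD, RingHom.map_det]
  congr 1
  ext i j
  simp only [RingHom.mapMatrix_apply, Matrix.map_apply, Matrix.of_apply, map_sub, map_facpow,
    Units.coe_map, Units.coe_map_inv, MonoidHom.coe_coe]

lemma map_rhsEOD {n : ℕ} (u : Fin n → R₁ˣ) (b : ℕ → R₁) (lam : Fin n → ℕ) :
    ψ (rhsEOD u b lam) =
      rhsEOD (fun i => Units.map (ψ : R₁ →* R₂) (u i)) (fun t => ψ (b t)) lam := by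
  rw [rhsEOD, rhsEOD, map_mul, RingHom.map_det]
  congr 1
  · rw [map_prod]
    refine Finset.prod_congr rfl fun i _ => ?_
    rw [map_prod]
    refine Finset.prod_congr rfl fun j _ => ?_
    simp only [map_sub, map_add, Units.coe_map, Units.coe_map_inv, MonoidHom.coe_coe]
  · congr 1
    ext i j
    simp only [RingHom.mapMatrix_apply, Matrix.map_apply, Matrix.of_apply, map_heod]

end DefsEOD

lemma main_field' {K : Type*} [Field K] {n : ℕ} (hn : 1 ≤ n) (x : Fin n → Kˣ) (a : ℕ → K)
    (lam : Fin n → ℕ) (hz : ∀ i j : Fin n, i ≠ j → zz x i ≠ zz x j)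
    (hx : ∀ i, (x i : K) ≠ xb x i) : lhsEOD x a lam = rhsEOD x a lam :=
  main_field hn x a lam hz hx


end AuxFJT

/-- flagged Jacobi-Trudi identity for factorial difference characters. -/
theorem flagged_jacobi_trudi_eod {R : Type*} [CommRing R] (n : ℕ) (hn : 1 ≤ n)
    (x : Fin n → Rˣ) (a : ℕ → R) (lam : Fin n → ℕ) (hlam : Antitone lam) :
    Matrix.det (Matrix.of fun i j : Fin n =>
        facpow ((x i : R)) a (lam j + (n - 1 - (j : ℕ)))
          - facpow ((((x i)⁻¹ : Rˣ) : R)) a (lam j + (n - 1 - (j : ℕ)))) =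
      (∏ i : Fin n, ∏ j ∈ Finset.Ioi i,
          ((x i : R) + (((x i)⁻¹ : Rˣ) : R) - (x j : R) - (((x j)⁻¹ : Rˣ) : R))) *
        Matrix.det (Matrix.of fun i j : Fin n =>
          heod (fun k : Fin (n - (i : ℕ)) =>
              x ⟨(i : ℕ) + (k : ℕ), by have := i.isLt; have := k.isLt; omega⟩) a
            ((lam j : ℤ) - (j : ℕ) + (i : ℕ))) := by
  classical
  let P := MvPolynomial (Fin n ⊕ ℕ) ℤ
  let M : Submonoid P :=
    Submonoid.closure (Set.range fun i : Fin n => (MvPolynomial.X (Sum.inl i) : P))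
  have hM : M ≤ nonZeroDivisors P := by
    rw [Submonoid.closure_le]
    rintro _ ⟨i, rfl⟩
    exact mem_nonZeroDivisors_of_ne_zero (MvPolynomial.X_ne_zero _)
  let A := Localization M
  haveI : IsDomain A := IsLocalization.isDomain_localization hM
  let F := FractionRing A
  let ιPA : P →+* A := algebraMap P A
  let ιAF : A →+* F := algebraMap A F
  have hinjA : Function.Injective ιPA := IsLocalization.injective A hM
  have hinjF : Function.Injective ιAF := IsFractionRing.injective A F
  have hunit : ∀ i : Fin n, IsUnit (ιPA (MvPolynomial.X (Sum.inl i))) := fun i =>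
    IsLocalization.map_units A (⟨_, Submonoid.subset_closure ⟨i, rfl⟩⟩ : M)
  let uA : Fin n → Aˣ := fun i => (hunit i).unit
  let aA : ℕ → A := fun t => ιPA (MvPolynomial.X (Sum.inr t))
  let uF : Fin n → Fˣ := fun i => Units.map (ιAF : A →* F) (uA i)
  let aF : ℕ → F := fun t => ιAF (aA t)
  let ι : P →+* F := ιAF.comp ιPA
  have hinj : Function.Injective ι := hinjF.comp hinjA
  have huF : ∀ i, (uF i : F) = ι (MvPolynomial.X (Sum.inl i)) := fun i => by
    show ιAF ((uA i : A)) = _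
    rw [IsUnit.unit_spec]
    rfl
  have hmulinv : ∀ i, (uF i : F) * ((uF i)⁻¹ : Fˣ) = 1 := fun i => Units.mul_inv _
  -- genericity
  have hx' : ∀ i, (uF i : F) ≠ xb uF i := by
    intro i h
    rw [xb] at h
    have h2 : (uF i : F) * (uF i : F) = 1 := by
      nth_rewrite 2 [h]
      exact hmulinv i
    rw [huF] at h2
    rw [show (1 : F) = ι 1 from (map_one ι).symm, ← map_mul] at h2
    have h3 := hinj h2
    have h4 := congrArg (MvPolynomial.eval
      (fun s => if s = Sum.inl i then (2 : ℤ) else 0)) h3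
    simp [MvPolynomial.eval_X] at h4
  have hz' : ∀ i j : Fin n, i ≠ j → zz uF i ≠ zz uF j := by
    intro i j hij h
    simp only [zz, xb] at h
    have hi := hmulinv i
    have hj := hmulinv j
    have E : (uF i : F) ^ 2 * (uF j : F) + (uF j : F) =
        (uF j : F) ^ 2 * (uF i : F) + (uF i : F) := by
      linear_combination ((uF i : F) * (uF j : F)) * h - (uF j : F) * hi + (uF i : F) * hj
    rw [huF i, huF j] at E
    rw [show ι (MvPolynomial.X (Sum.inl i)) ^ 2 * ι (MvPolynomial.X (Sum.inl j)) +
          ι (MvPolynomial.X (Sum.inl j)) =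
        ι (MvPolynomial.X (Sum.inl i) ^ 2 * MvPolynomial.X (Sum.inl j) +
          MvPolynomial.X (Sum.inl j)) from by simp [map_add, map_mul, map_pow],
      show ι (MvPolynomial.X (Sum.inl j)) ^ 2 * ι (MvPolynomial.X (Sum.inl i)) +
          ι (MvPolynomial.X (Sum.inl i)) =
        ι (MvPolynomial.X (Sum.inl j) ^ 2 * MvPolynomial.X (Sum.inl i) +
          MvPolynomial.X (Sum.inl i)) from by simp [map_add, map_mul, map_pow]] at E
    have h3 := hinj E
    have h4 := congrArg (MvPolynomial.eval
      (fun s => if s = Sum.inl i then (2 : ℤ) else if s = Sum.inl j then 3 else 0)) h3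
    have hne : (Sum.inl j : Fin n ⊕ ℕ) ≠ Sum.inl i := fun e => hij (Sum.inl.inj e).symm
    simp [MvPolynomial.eval_X, hne] at h4
  -- identity over A
  have hA : lhsEOD uA aA lam = rhsEOD uA aA lam := by
    apply hinjF
    rw [map_lhsEOD, map_rhsEOD]
    exact main_field' hn uF aF lam hz' hx'
  -- transfer to R
  let vR : Fin n ⊕ ℕ → R := Sum.elim (fun i => (x i : R)) a
  let φP : P →+* R := MvPolynomial.eval₂Hom (Int.castRingHom R) vR
  have hgφ : ∀ y : M, IsUnit (φP (y : P)) := by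
    rintro ⟨y, hy⟩
    refine Submonoid.closure_induction ?_ ?_ ?_ hy
    · rintro _ ⟨i, rfl⟩
      show IsUnit (φP (MvPolynomial.X (Sum.inl i)))
      rw [show φP (MvPolynomial.X (Sum.inl i)) = ((x i : R)) from MvPolynomial.eval₂Hom_X' _ _ _]
      exact (x i).isUnit
    · simp only [map_one]; exact isUnit_one
    · intro p q _ _ hp hq
      rw [map_mul]; exact hp.mul hq
  let φ : A →+* R := IsLocalization.lift (M := M) (S := A) hgφ
  have hφu : ∀ i, Units.map (φ : A →* R) (uA i) = x i := by
    intro i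
    ext
    show φ ((uA i : A)) = (x i : R)
    rw [IsUnit.unit_spec]
    show φ (ιPA (MvPolynomial.X (Sum.inl i))) = _
    rw [IsLocalization.lift_eq]
    exact MvPolynomial.eval₂Hom_X' _ _ _
  have hφa : ∀ t, φ (aA t) = a t := by
    intro t
    show φ (ιPA (MvPolynomial.X (Sum.inr t))) = _
    rw [IsLocalization.lift_eq]
    exact MvPolynomial.eval₂Hom_X' _ _ _
  have h1 : (fun i => Units.map (φ : A →* R) (uA i)) = x := funext hφu
  have h2 : (fun t => φ (aA t)) = a := funext hφa
  show lhsEOD x a lam = rhsEOD x a lam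
  calc lhsEOD x a lam = φ (lhsEOD uA aA lam) := by rw [map_lhsEOD, h1, h2]
    _ = φ (rhsEOD uA aA lam) := by rw [hA]
    _ = rhsEOD x a lam := by rw [map_rhsEOD, h1, h2]
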